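/- The preimage under μ[z₀:z₁:z₂] = (|z₀|,|z₁|,|z₂|)/Σ|zₖ| of the set {x ∈ Δ² : x₀ = x₁ ≥ x₂} is {[1:w₁:w₂] : |w₁| = 1, |w₂| ≤ 1}, which is homeomorphic to the solid torus S¹ × D². -/

import Mathlib

open scoped LinearAlgebra.Projectivization
open Projectivization

/-- The complex projective plane `ℂP²` carries the quotient topology from `ℂ³ \ {0}`. -/
noncomputable instance : TopologicalSpace (ℙ ℂ (Fin 3 → ℂ)) := by unfold Projectivization; infer_instance

namespace SolidTorusAux

noncomputable def f (z : {v : Fin 3 → ℂ // v ≠ 0}) : Fin 3 → Fin 3 → ℂ :=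
  fun i j => z.1 i * (starRingEnd ℂ) (z.1 j) / ((∑ k, ‖z.1 k‖ ^ 2 : ℝ) : ℂ)

lemma sumsq_pos (z : {v : Fin 3 → ℂ // v ≠ 0}) : 0 < ∑ k, ‖z.1 k‖ ^ 2 := by
  obtain ⟨k, hk⟩ := Function.ne_iff.mp z.2
  exact Finset.sum_pos' (fun _ _ => by positivity)
    ⟨k, Finset.mem_univ _, by simpa using pow_pos (norm_pos_iff.mpr hk) 2⟩

lemma f_resp : ∀ a b : {v : Fin 3 → ℂ // v ≠ 0},
    (projectivizationSetoid ℂ (Fin 3 → ℂ)).r a b → f a = f b := by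
  rintro ⟨z, hz⟩ ⟨w, hw⟩ ⟨a, (ha : a • w = z)⟩
  subst ha
  funext i j
  have ha0 : (a : ℂ) ≠ 0 := a.ne_zero
  have hca : (starRingEnd ℂ) (a : ℂ) ≠ 0 := by simpa using ha0
  have hm : ((‖(a : ℂ)‖ ^ 2 : ℝ) : ℂ) = (a : ℂ) * (starRingEnd ℂ) (a : ℂ) := by
    rw [Complex.mul_conj]
    norm_cast
    simp [Complex.normSq_eq_norm_sq]
  have hs : ((∑ k, ‖(a • w : Fin 3 → ℂ) k‖ ^ 2 : ℝ) : ℂ)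
      = ((a : ℂ) * (starRingEnd ℂ) (a : ℂ)) * ((∑ k, ‖w k‖ ^ 2 : ℝ) : ℂ) := by
    rw [← hm]
    push_cast
    rw [Finset.mul_sum]
    refine Finset.sum_congr rfl fun k _ => ?_
    simp [Units.smul_def, norm_mul, mul_pow]
  simp only [f]
  rw [hs]
  set N : ℂ := ((∑ k, ‖w k‖ ^ 2 : ℝ) : ℂ) with hN
  have h1 : (a • w : Fin 3 → ℂ) i * (starRingEnd ℂ) ((a • w : Fin 3 → ℂ) j)
      = ((a : ℂ) * (starRingEnd ℂ) (a : ℂ)) * (w i * (starRingEnd ℂ) (w j)) := by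
    simp [Units.smul_def, map_mul]
    ring
  rw [h1, mul_div_mul_left _ _ (mul_ne_zero ha0 hca)]

lemma f_inj : ∀ a b : {v : Fin 3 → ℂ // v ≠ 0},
    f a = f b → (projectivizationSetoid ℂ (Fin 3 → ℂ)).r a b := by
  rintro ⟨z, hz⟩ ⟨w, hw⟩ h
  obtain ⟨i, hwi'⟩ := Function.ne_iff.mp hw
  have hwi : w i ≠ 0 := by simpa using hwi'
  have hNz : (0:ℝ) < ∑ k, ‖z k‖ ^ 2 := sumsq_pos ⟨z, hz⟩
  have hNw : (0:ℝ) < ∑ k, ‖w k‖ ^ 2 := sumsq_pos ⟨w, hw⟩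
  have hNz' : ((∑ k, ‖z k‖ ^ 2 : ℝ) : ℂ) ≠ 0 := by exact_mod_cast hNz.ne'
  have hNw' : ((∑ k, ‖w k‖ ^ 2 : ℝ) : ℂ) ≠ 0 := by exact_mod_cast hNw.ne'
  set Nz : ℂ := ((∑ k, ‖z k‖ ^ 2 : ℝ) : ℂ) with hNzdef
  set Nw : ℂ := ((∑ k, ‖w k‖ ^ 2 : ℝ) : ℂ) with hNwdef
  have hii := congrFun (congrFun h i) i
  simp only [f] at hii
  have hzi : z i ≠ 0 := by
    intro h0
    rw [h0] at hii
    simp only [zero_mul, map_zero, mul_zero, zero_div] at hii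
    have h2 : w i * (starRingEnd ℂ) (w i) = 0 :=
      (div_eq_zero_iff.mp hii.symm).resolve_right hNw'
    rw [Complex.mul_conj, Complex.ofReal_eq_zero, Complex.normSq_eq_zero] at h2
    exact hwi h2
  have hczi : (starRingEnd ℂ) (z i) ≠ 0 := by simpa using hzi
  have hcwi : (starRingEnd ℂ) (w i) ≠ 0 := by simpa using hwi
  set c : ℂ := ((starRingEnd ℂ) (w i) * Nz) / (Nw * (starRingEnd ℂ) (z i)) with hc
  have hc0 : c ≠ 0 :=
    div_ne_zero (mul_ne_zero hcwi hNz') (mul_ne_zero hNw' hczi)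
  refine ⟨Units.mk0 c hc0, ?_⟩
  show c • w = z
  funext j
  have hji := congrFun (congrFun h j) i
  simp only [f] at hji
  rw [div_eq_div_iff hNz' hNw'] at hji
  show c * w j = z j
  rw [hc, div_mul_eq_mul_div, div_eq_iff (mul_ne_zero hNw' hczi)]
  linear_combination -hji

noncomputable def F : ℙ ℂ (Fin 3 → ℂ) → (Fin 3 → Fin 3 → ℂ) :=
  Quotient.lift f f_resp

lemma F_cont : Continuous F := by
  refine Continuous.quotient_lift ?_ f_resp
  refine continuous_pi fun i => continuous_pi fun j => Continuous.div ?_ ?_ ?_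
  · exact (((continuous_apply i).comp continuous_subtype_val).mul
      (continuous_star.comp ((continuous_apply j).comp continuous_subtype_val)))
  · exact Complex.continuous_ofReal.comp
      (continuous_finset_sum _ fun k _ =>
        (((continuous_apply k).comp continuous_subtype_val).norm.pow 2))
  · intro z
    exact_mod_cast (sumsq_pos z).ne'

lemma F_inj : Function.Injective F := by
  intro P Q
  induction P using Quotient.inductionOn' with
  | h z =>
  induction Q using Quotient.inductionOn' with
  | h w =>
  intro h
  exact Quotient.sound' (f_inj z w h)

instance : T2Space (ℙ ℂ (Fin 3 → ℂ)) := .of_injective_continuous F_inj F_cont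

end SolidTorusAux


theorem moment_map_preimage_interior_one_cube
    (μ : ℙ ℂ (Fin 3 → ℂ) → (Fin 3 → ℝ))
    (hμ : ∀ P : ℙ ℂ (Fin 3 → ℂ), μ P = fun i => ‖P.rep i‖ / ∑ j, ‖P.rep j‖) :
    μ ⁻¹' {x : Fin 3 → ℝ | (∀ i, 0 ≤ x i) ∧ ∑ i, x i = 1 ∧ x 0 = x 1 ∧ x 2 ≤ x 0} =
      {P : ℙ ℂ (Fin 3 → ℂ) | ∃ (w₁ w₂ : ℂ) (h : ![1, w₁, w₂] ≠ 0),
        ‖w₁‖ = 1 ∧ ‖w₂‖ ≤ 1 ∧ P = Projectivization.mk ℂ ![1, w₁, w₂] h} ∧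
    Nonempty ((μ ⁻¹' {x : Fin 3 → ℝ | (∀ i, 0 ≤ x i) ∧ ∑ i, x i = 1 ∧ x 0 = x 1 ∧ x 2 ≤ x 0} :
        Set (ℙ ℂ (Fin 3 → ℂ))) ≃ₜ
      (Metric.sphere (0 : ℂ) 1 × Metric.closedBall (0 : ℂ) 1)) := by
  have hchar : ∀ P : ℙ ℂ (Fin 3 → ℂ),
      μ P ∈ {x : Fin 3 → ℝ | (∀ i, 0 ≤ x i) ∧ ∑ i, x i = 1 ∧ x 0 = x 1 ∧ x 2 ≤ x 0} ↔
      (‖P.rep 0‖ = ‖P.rep 1‖ ∧ ‖P.rep 2‖ ≤ ‖P.rep 0‖) := by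
    intro P
    have hT : (0:ℝ) < ∑ j, ‖P.rep j‖ := by
      obtain ⟨k, hk⟩ := Function.ne_iff.mp P.rep_nonzero
      exact Finset.sum_pos' (fun _ _ => norm_nonneg _)
        ⟨k, Finset.mem_univ _, norm_pos_iff.mpr (by simpa using hk)⟩
    rw [hμ]
    constructor
    · rintro ⟨-, -, h01, h2⟩
      refine ⟨?_, (div_le_div_iff_of_pos_right hT).mp h2⟩
      rw [div_eq_div_iff hT.ne' hT.ne'] at h01
      exact mul_right_cancel₀ hT.ne' h01
    · rintro ⟨h01, h2⟩
      refine ⟨fun i => div_nonneg (norm_nonneg _) hT.le, ?_, by dsimp only; rw [h01],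
        (div_le_div_iff_of_pos_right hT).mpr h2⟩
      rw [← Finset.sum_div, div_self hT.ne']
  have heq : μ ⁻¹' {x : Fin 3 → ℝ | (∀ i, 0 ≤ x i) ∧ ∑ i, x i = 1 ∧ x 0 = x 1 ∧ x 2 ≤ x 0} =
      {P : ℙ ℂ (Fin 3 → ℂ) | ∃ (w₁ w₂ : ℂ) (h : ![1, w₁, w₂] ≠ 0),
        ‖w₁‖ = 1 ∧ ‖w₂‖ ≤ 1 ∧ P = Projectivization.mk ℂ ![1, w₁, w₂] h} := by
    ext P
    rw [Set.mem_preimage, hchar P]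
    constructor
    · rintro ⟨h01, h2⟩
      have hz0 : P.rep 0 ≠ 0 := by
        intro h0
        apply P.rep_nonzero
        have h1 : P.rep 1 = 0 := by
          have := h01; rw [h0, norm_zero] at this
          exact norm_eq_zero.mp this.symm
        have h2' : P.rep 2 = 0 := by
          rw [h0, norm_zero] at h2
          exact norm_eq_zero.mp (le_antisymm h2 (norm_nonneg _))
        funext j
        fin_cases j <;> simpa [h0, h1, h2']
      have hne : (![1, P.rep 1 / P.rep 0, P.rep 2 / P.rep 0] : Fin 3 → ℂ) ≠ 0 := by
        intro h
        have := congrFun h 0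
        simpa using this
      refine ⟨P.rep 1 / P.rep 0, P.rep 2 / P.rep 0, hne, ?_, ?_, ?_⟩
      · rw [norm_div, ← h01, div_self (norm_ne_zero_iff.mpr hz0)]
      · rw [norm_div, div_le_one (norm_pos_iff.mpr hz0)]; exact h2
      · have key : Projectivization.mk ℂ P.rep P.rep_nonzero
            = Projectivization.mk ℂ ![1, P.rep 1 / P.rep 0, P.rep 2 / P.rep 0] hne := by
          rw [mk_eq_mk_iff]
          refine ⟨Units.mk0 (P.rep 0) hz0, ?_⟩
          funext j
          fin_cases j <;>
            simp [Units.smul_def, mul_div_cancel₀ _ hz0]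
        rw [P.mk_rep] at key
        exact key
    · rintro ⟨w₁, w₂, h, hw₁, hw₂, rfl⟩
      obtain ⟨a, ha⟩ := exists_smul_eq_mk_rep ℂ (![1, w₁, w₂] : Fin 3 → ℂ) h
      have hrep : ∀ j, (Projectivization.mk ℂ ![1, w₁, w₂] h).rep j
          = (a : ℂ) * (![1, w₁, w₂] : Fin 3 → ℂ) j := fun j => by
        rw [← ha]; simp [Units.smul_def]
      constructor
      · rw [hrep 0, hrep 1]
        simp [norm_mul, hw₁]
      · rw [hrep 0, hrep 2]
        simp only [norm_mul]
        calc ‖(a:ℂ)‖ * ‖(![1, w₁, w₂] : Fin 3 → ℂ) 2‖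
            ≤ ‖(a:ℂ)‖ * 1 := by
              refine mul_le_mul_of_nonneg_left ?_ (norm_nonneg _)
              simpa using hw₂
          _ = ‖(a:ℂ)‖ * ‖(![1, w₁, w₂] : Fin 3 → ℂ) 0‖ := by simp
  refine ⟨heq, ?_⟩
  rw [heq]
  haveI : CompactSpace (Metric.closedBall (0:ℂ) 1) :=
    isCompact_iff_compactSpace.mp (isCompact_closedBall _ _)
  have hne' : ∀ u w : ℂ, (![1, u, w] : Fin 3 → ℂ) ≠ 0 := fun u w h => by
    simpa using congrFun h 0
  let e : (Metric.sphere (0:ℂ) 1 × Metric.closedBall (0:ℂ) 1) →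
      {P : ℙ ℂ (Fin 3 → ℂ) | ∃ (w₁ w₂ : ℂ) (h : ![1, w₁, w₂] ≠ 0),
        ‖w₁‖ = 1 ∧ ‖w₂‖ ≤ 1 ∧ P = Projectivization.mk ℂ ![1, w₁, w₂] h} :=
    fun p => ⟨Projectivization.mk ℂ ![1, p.1.1, p.2.1] (hne' _ _),
      ⟨p.1.1, p.2.1, hne' _ _, mem_sphere_zero_iff_norm.mp p.1.2,
        mem_closedBall_zero_iff.mp p.2.2, rfl⟩⟩
  have hbij : Function.Bijective e := by
    constructor
    · rintro ⟨⟨u, hu⟩, ⟨w, hw⟩⟩ ⟨⟨u', hu'⟩, ⟨w', hw'⟩⟩ hpq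
      have h1 : Projectivization.mk ℂ ![1, u, w] (hne' _ _)
          = Projectivization.mk ℂ ![1, u', w'] (hne' _ _) := congrArg Subtype.val hpq
      rw [mk_eq_mk_iff] at h1
      obtain ⟨a, ha⟩ := h1
      have h0 := congrFun ha 0
      have ha1 : (a : ℂ) = 1 := by simpa [Units.smul_def] using h0
      have e1 := congrFun ha 1
      have e2 := congrFun ha 2
      simp [Units.smul_def, ha1] at e1 e2
      simp [Prod.ext_iff, Subtype.ext_iff, e1.symm, e2.symm]
    · rintro ⟨P, w₁, w₂, h, hw₁, hw₂, rfl⟩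
      refine ⟨⟨⟨w₁, mem_sphere_zero_iff_norm.mpr hw₁⟩,
        ⟨w₂, mem_closedBall_zero_iff.mpr hw₂⟩⟩, rfl⟩
  have hcont : Continuous e := by
    apply Continuous.subtype_mk
    have hc2 : Continuous (fun p : (Metric.sphere (0:ℂ) 1 × Metric.closedBall (0:ℂ) 1) =>
        (⟨![1, p.1.1, p.2.1], hne' _ _⟩ : {v : Fin 3 → ℂ // v ≠ 0})) := by
      apply Continuous.subtype_mk
      refine continuous_pi fun i => ?_
      fin_cases i
      · simpa using continuous_const
      · simpa using continuous_fst.subtype_val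
      · simpa using continuous_snd.subtype_val
    exact continuous_quot_mk.comp hc2
  exact ⟨(Continuous.homeoOfEquivCompactToT2 (f := Equiv.ofBijective e hbij) hcont).symm⟩
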